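/- Let ū : ℝ → ℝ be C^3 near a fixed point x* with ū(x*) = x*, ū'(x*) = 1, and ū''(x*) = α ≠ 0. Set φ(x) = ū(x) - ū'(x) + 1 and h(x) = (φ(x) - x·φ'(x)) / (1 - φ'(x)). Then h(x*) = x* and h'(x*) = 0, i.e. h is an accelerator of ū. -/

import Mathlib

theorem myderiv {n m : ℕ} (f : ℝ → ℝ) (x : ℝ) (hf : ContDiffAt ℝ n f x) (hmn : m + 1 ≤ n) :
    ContDiffAt ℝ m (deriv f) x := by
  have h1 : ContDiffAt ℝ m (fderiv ℝ f) x := hf.fderiv_right (by exact_mod_cast hmn)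
  have h2 : ContDiffAt ℝ m (fun y => fderiv ℝ f y 1) x := h1.clm_apply contDiffAt_const
  have : (deriv f) = fun y => fderiv ℝ f y 1 := by
    funext y; rw [fderiv_apply_one_eq_deriv]
  rw [this]; exact h2

/-- `h = C(x, φ)` with `φ(x) = ū(x) - ū'(x) + 1` is an accelerator of `ū`. -/
theorem stmt_5 (xs α : ℝ) (hα : α ≠ 0) (u φ h : ℝ → ℝ)
    (hu : ContDiffAt ℝ 3 u xs) (hfix : u xs = xs) (hu1 : deriv u xs = 1)
    (hu2 : iteratedDeriv 2 u xs = α)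
    (hφ : ∀ x, φ x = u x - deriv u x + 1)
    (hh : ∀ x, h x = (φ x - x * deriv φ x) / (1 - deriv φ x)) :
    h xs = xs ∧ deriv h xs = 0 := by
  have hu' : ContDiffAt ℝ 2 (deriv u) xs := myderiv u xs hu (by norm_num)
  have hu'' : ContDiffAt ℝ 1 (deriv (deriv u)) xs := myderiv (deriv u) xs hu' le_rfl
  have hu2' : deriv (deriv u) xs = α := by
    rw [show (deriv (deriv u)) = iteratedDeriv 2 u from by
      rw [iteratedDeriv_succ, iteratedDeriv_one]]
    exact hu2
  set c : ℝ := deriv (deriv (deriv u)) xs with hc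
  have Hu : HasDerivAt u 1 xs := by
    have := (hu.differentiableAt (by norm_num)).hasDerivAt
    rwa [hu1] at this
  have Hu' : HasDerivAt (deriv u) α xs := by
    have := (hu'.differentiableAt (by norm_num)).hasDerivAt
    rwa [hu2'] at this
  have Hu'' : HasDerivAt (deriv (deriv u)) c xs :=
    (hu''.differentiableAt (by norm_num)).hasDerivAt
  have hφf : φ = fun x => u x - deriv u x + 1 := funext hφ
  have hev : (deriv φ) =ᶠ[nhds xs] fun x => deriv u x - deriv (deriv u) x := by
    filter_upwards [hu.eventually (by simp)] with x hx
    have d1 : DifferentiableAt ℝ u x := hx.differentiableAt (by norm_num)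
    have d2 : DifferentiableAt ℝ (deriv u) x :=
      (myderiv (m := 2) u x hx (by norm_num)).differentiableAt (by norm_num)
    rw [hφf]
    rw [deriv_add_const, deriv_fun_sub d1 d2]
  have Hφ : HasDerivAt φ (1 - α) xs := by
    rw [hφf]; exact (Hu.sub Hu').add_const 1
  have Hg : HasDerivAt (deriv φ) (α - c) xs :=
    (Hu'.sub Hu'').congr_of_eventuallyEq hev
  have φxs : φ xs = xs := by rw [hφ, hfix, hu1]; ring
  have dφxs : deriv φ xs = 1 - α := by
    rw [hev.self_of_nhds]
    show deriv u xs - deriv (deriv u) xs = 1 - α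
    rw [hu1, hu2']
  constructor
  · rw [hh xs, φxs, dφxs]
    have h1 : 1 - (1 - α) = α := by ring
    rw [h1]
    field_simp
    ring
  · have HN : HasDerivAt (fun x => φ x - x * deriv φ x)
        ((1 - α) - (1 * deriv φ xs + xs * (α - c))) xs :=
      Hφ.sub ((hasDerivAt_id xs).mul Hg)
    have HD : HasDerivAt (fun x => 1 - deriv φ x) (0 - (α - c)) xs :=
      (hasDerivAt_const xs 1).sub Hg
    have hDne : 1 - deriv φ xs ≠ 0 := by rw [dφxs]; intro hcon; apply hα; linarith
    have HH := HN.fun_div HD hDne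
    have hhf : h = fun x => (φ x - x * deriv φ x) / (1 - deriv φ x) := funext hh
    rw [hhf, HH.deriv, φxs, dφxs]
    have hnum : ((1 - α) - (1 * (1 - α) + xs * (α - c))) * (1 - (1 - α)) -
        (xs - xs * (1 - α)) * (0 - (α - c)) = 0 := by ring
    rw [hnum, zero_div]
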